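/- arXiv:1202.6562 — 2 statements merged into one kernel-verified Lean document; each statement's English description precedes it below -/
import Mathlib

section
/- Suppose (d̂, α̂) minimizes (d, α) ↦ ‖E − dαᵀ‖_F² over all unit vectors d ∈ R^d and all α ∈ R^n with at most k nonzero entries, with Eα̂ ≠ 0 and α̂ ≠ 0. Then ‖α̂‖₂² = ‖Eα̂‖₂. -/
open Matrix BigOperators

noncomputable def frob2 {d n : ℕ} (M : Matrix (Fin d) (Fin n) ℝ) : ℝ :=
  ∑ i, ∑ j, (M i j) ^ 2

noncomputable def enorm2 {n : ℕ} (v : Fin n → ℝ) : ℝ :=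
  Real.sqrt (∑ i, v i ^ 2)

noncomputable def spars {n : ℕ} (v : Fin n → ℝ) : ℕ :=
  Nat.card {i : Fin n // v i ≠ 0}

lemma frob2_expand {d n : ℕ} (E : Matrix (Fin d) (Fin n) ℝ) (u : Fin d → ℝ) (a : Fin n → ℝ) :
    frob2 (E - Matrix.vecMulVec u a) =
      frob2 E - 2 * ∑ i, u i * (E.mulVec a i) + (∑ i, u i ^ 2) * (∑ j, a j ^ 2) := by
  simp only [frob2, Matrix.sub_apply, Matrix.vecMulVec_apply, Matrix.mulVec, dotProduct,
    sub_sq, Finset.sum_add_distrib, Finset.sum_sub_distrib, Finset.mul_sum, Finset.sum_mul,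
    mul_pow]
  ring_nf
  congr 1
  congr 1
  · simp only [mul_comm (u _) (E _ _)]
  · exact Finset.sum_comm.trans (Finset.sum_congr rfl fun i _ => Finset.sum_congr rfl fun j _ => by ring)

lemma spars_smul {n : ℕ} (s : ℝ) (hs : s ≠ 0) (v : Fin n → ℝ) :
    spars (fun j => s * v j) = spars v := by
  unfold spars
  exact Nat.card_congr (Equiv.subtypeEquivRight fun j => by simp [hs])

theorem stmt6 (d n k : ℕ) (hk : 1 ≤ k) (E : Matrix (Fin d) (Fin n) ℝ)
    (dh : Fin d → ℝ) (ah : Fin n → ℝ)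
    (hd : ∑ i, dh i ^ 2 = 1) (ha : spars ah ≤ k)
    (hmin : ∀ (u : Fin d → ℝ) (a : Fin n → ℝ), ∑ i, u i ^ 2 = 1 → spars a ≤ k →
        frob2 (E - Matrix.vecMulVec dh ah) ≤ frob2 (E - Matrix.vecMulVec u a))
    (hEa : E.mulVec ah ≠ 0) (hah : ah ≠ 0) :
    ∑ i, ah i ^ 2 = enorm2 (E.mulVec ah) := by
  set A : ℝ := ∑ i, ah i ^ 2 with hA
  set B : ℝ := enorm2 (E.mulVec ah) with hB
  have hBsq : B ^ 2 = ∑ i, (E.mulVec ah i) ^ 2 := by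
    rw [hB, enorm2, Real.sq_sqrt (Finset.sum_nonneg fun i _ => sq_nonneg _)]
  have hApos : 0 < A := by
    obtain ⟨j, hj⟩ := Function.ne_iff.mp hah
    exact Finset.sum_pos' (fun i _ => sq_nonneg _) ⟨j, Finset.mem_univ j, pow_two_pos_of_ne_zero hj⟩
  have hBpos : 0 < B := by
    obtain ⟨i, hi⟩ := Function.ne_iff.mp hEa
    have : 0 < ∑ i, (E.mulVec ah i) ^ 2 :=
      Finset.sum_pos' (fun i _ => sq_nonneg _) ⟨i, Finset.mem_univ i, pow_two_pos_of_ne_zero hi⟩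
    rw [hB, enorm2]; positivity
  -- competitor direction
  set u : Fin d → ℝ := fun i => E.mulVec ah i / B with hu
  have hu1 : ∑ i, u i ^ 2 = 1 := by
    simp only [hu, div_pow, ← Finset.sum_div]
    rw [← hBsq, div_self (by positivity)]
  set s : ℝ := B / A with hs
  have hsne : s ≠ 0 := by positivity
  -- competitor alpha
  set a : Fin n → ℝ := fun j => s * ah j with haa
  have hsp : spars a ≤ k := by rw [haa, spars_smul s hsne]; exact ha
  have hEaa : ∀ i, E.mulVec a i = s * E.mulVec ah i := by
    intro i
    simp only [haa, Matrix.mulVec, dotProduct, Finset.mul_sum]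
    exact Finset.sum_congr rfl fun j _ => by ring
  have hub : frob2 (E - Matrix.vecMulVec u a) = frob2 E - B ^ 2 / A := by
    rw [frob2_expand, hu1]
    have h1 : ∑ i, u i * E.mulVec a i = s * B := by
      simp only [hu, hEaa]
      have : ∑ i, E.mulVec ah i / B * (s * E.mulVec ah i)
          = (s / B) * ∑ i, (E.mulVec ah i) ^ 2 := by
        rw [Finset.mul_sum]; exact Finset.sum_congr rfl fun i _ => by ring
      rw [this, ← hBsq]
      field_simp
    have h2 : ∑ j, a j ^ 2 = s ^ 2 * A := by
      simp only [haa, mul_pow, ← Finset.mul_sum, hA]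
    rw [h1, h2, hs]
    field_simp
    ring
  -- lower bound via Cauchy-Schwarz
  have hcs : ∑ i, dh i * E.mulVec ah i ≤ B := by
    have := Real.sum_mul_le_sqrt_mul_sqrt Finset.univ dh (E.mulVec ah)
    rwa [hd, Real.sqrt_one, one_mul, ← enorm2, ← hB] at this
  have hlb : frob2 E - 2 * B + A ≤ frob2 (E - Matrix.vecMulVec dh ah) := by
    rw [frob2_expand, hd, one_mul, ← hA]
    nlinarith [hcs]
  have hmain := hmin u a hu1 hsp
  rw [hub] at hmain
  have key : frob2 E - 2 * B + A ≤ frob2 E - B ^ 2 / A := le_trans hlb hmain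
  have hdiv : B ^ 2 / A * A = B ^ 2 := div_mul_cancel₀ _ hApos.ne'
  have key2 : A * A - 2 * B * A + B ^ 2 ≤ 0 := by
    nlinarith [mul_le_mul_of_nonneg_right key hApos.le]
  nlinarith [sq_nonneg (A - B), key2]
end

section
/- For any E ∈ R^{d×n}, the minimum of ‖E − dαᵀ‖_F² over unit vectors d ∈ R^d and k-sparse α ∈ R^n equals ‖E‖_F² − max{wᵀEᵀEw : ‖w‖₂ = 1, ‖w‖₀ ≤ k}, provided the maximum of the quadratic form is positive. -/
open Matrix BigOperators

noncomputable def enorm {n : ℕ} (v : Fin n → ℝ) : ℝ :=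
  Real.sqrt (∑ i, v i ^ 2)

lemma spars_mul_left {n : ℕ} (c : ℝ) (hc : c ≠ 0) (w : Fin n → ℝ) :
    spars (fun j => c * w j) = spars w := by
  unfold spars
  exact Nat.card_congr (Equiv.subtypeEquivRight (by intro j; simp [hc, mul_eq_zero]))

lemma quad_eq {d n : ℕ} (E : Matrix (Fin d) (Fin n) ℝ) (w : Fin n → ℝ) :
    w ⬝ᵥ (Eᵀ * E).mulVec w = ∑ i, (E.mulVec w i) ^ 2 := by
  simp only [dotProduct, Matrix.mulVec, Matrix.mul_apply, Matrix.transpose_apply,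
    Finset.mul_sum, Finset.sum_mul]
  rw [Finset.sum_comm]
  have key : ∀ y : Fin n, ∑ x : Fin n, ∑ i : Fin d, w x * (E i x * E i y * w y)
      = ∑ i : Fin d, (∑ x : Fin n, E i x * w x) * (E i y * w y) := by
    intro y
    rw [Finset.sum_comm]
    refine Finset.sum_congr rfl fun i _ => ?_
    rw [Finset.sum_mul]
    exact Finset.sum_congr rfl fun x _ => by ring
  simp only [key]
  rw [Finset.sum_comm]
  exact Finset.sum_congr rfl fun i _ => by rw [← Finset.mul_sum, sq]

lemma frob_expand {d n : ℕ} (E : Matrix (Fin d) (Fin n) ℝ) (u : Fin d → ℝ) (a : Fin n → ℝ) :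
    frob2 (E - Matrix.vecMulVec u a)
      = frob2 E - 2 * (∑ i, u i * E.mulVec a i) + (∑ i, u i ^ 2) * (∑ j, a j ^ 2) := by
  simp only [frob2, Matrix.sub_apply, Matrix.vecMulVec_apply, Matrix.mulVec, dotProduct,
    Finset.mul_sum, Finset.sum_mul]
  rw [show (∑ x : Fin n, ∑ i : Fin d, u i ^ 2 * a x ^ 2)
      = ∑ i : Fin d, ∑ x : Fin n, u i ^ 2 * a x ^ 2 from Finset.sum_comm]
  rw [← Finset.sum_sub_distrib, ← Finset.sum_add_distrib]
  refine Finset.sum_congr rfl fun i _ => ?_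
  rw [← Finset.sum_sub_distrib, ← Finset.sum_add_distrib]
  exact Finset.sum_congr rfl fun j _ => by ring

lemma mulVec_smul' {d n : ℕ} (E : Matrix (Fin d) (Fin n) ℝ) (c : ℝ) (w : Fin n → ℝ) (i : Fin d) :
    E.mulVec (fun j => c * w j) i = c * E.mulVec w i := by
  simp only [Matrix.mulVec, dotProduct, Finset.mul_sum]
  exact Finset.sum_congr rfl fun j _ => by ring

theorem stmt18 (d n k : ℕ) (hk1 : 1 ≤ k) (hkn : k ≤ n) (E : Matrix (Fin d) (Fin n) ℝ)
    (hpos : 0 < sSup {r : ℝ | ∃ w : Fin n → ℝ,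
        (∑ i, w i ^ 2 = 1 ∧ spars w ≤ k) ∧ r = w ⬝ᵥ (Eᵀ * E).mulVec w}) :
    sInf {r : ℝ | ∃ (u : Fin d → ℝ) (a : Fin n → ℝ),
        (∑ i, u i ^ 2 = 1 ∧ spars a ≤ k) ∧ r = frob2 (E - Matrix.vecMulVec u a)} =
      frob2 E - sSup {r : ℝ | ∃ w : Fin n → ℝ,
        (∑ i, w i ^ 2 = 1 ∧ spars w ≤ k) ∧ r = w ⬝ᵥ (Eᵀ * E).mulVec w} := by
  set setS := {r : ℝ | ∃ w : Fin n → ℝ,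
      (∑ i, w i ^ 2 = 1 ∧ spars w ≤ k) ∧ r = w ⬝ᵥ (Eᵀ * E).mulVec w} with hsetS
  set setT := {r : ℝ | ∃ (u : Fin d → ℝ) (a : Fin n → ℝ),
      (∑ i, u i ^ 2 = 1 ∧ spars a ≤ k) ∧ r = frob2 (E - Matrix.vecMulVec u a)} with hsetT
  set S := sSup setS with hS
  -- setS is nonempty
  have hSne : setS.Nonempty := by
    by_contra h
    rw [Set.not_nonempty_iff_eq_empty] at h
    rw [hS, h, Real.sSup_empty] at hpos
    exact lt_irrefl 0 hpos
  -- setS is bounded above by frob2 E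
  have hSbdd : BddAbove setS := by
    refine ⟨frob2 E, fun r hr => ?_⟩
    obtain ⟨w, ⟨hw1, _⟩, hrw⟩ := hr
    rw [hrw, quad_eq]
    calc ∑ i, (E.mulVec w i) ^ 2
        ≤ ∑ i, (∑ j, E i j ^ 2) * (∑ j, w j ^ 2) := by
          refine Finset.sum_le_sum fun i _ => ?_
          simpa [Matrix.mulVec, dotProduct] using
            Finset.sum_mul_sq_le_sq_mul_sq Finset.univ (fun j => E i j) w
      _ = frob2 E := by simp [frob2, hw1]
  -- construction: from r ∈ setS with 0 < r build an element of setT of value frob2 E - r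
  have hconstruct : ∀ r ∈ setS, 0 < r → (frob2 E - r) ∈ setT := by
    intro r hr hrpos
    obtain ⟨w, ⟨hw1, hwk⟩, hrw⟩ := hr
    have hveq : r = ∑ i, (E.mulVec w i) ^ 2 := by rw [hrw, quad_eq]
    have hc : Real.sqrt r ≠ 0 := by positivity
    have hc2 : Real.sqrt r * Real.sqrt r = r := Real.mul_self_sqrt hrpos.le
    refine ⟨fun i => E.mulVec w i / Real.sqrt r, fun j => Real.sqrt r * w j, ⟨?_, ?_⟩, ?_⟩
    · have : ∀ i, (E.mulVec w i / Real.sqrt r) ^ 2 = (E.mulVec w i) ^ 2 / r := by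
        intro i; rw [div_pow, Real.sq_sqrt hrpos.le]
      rw [Finset.sum_congr rfl fun i _ => this i, ← Finset.sum_div, ← hveq,
        div_self hrpos.ne']
    · rw [spars_mul_left _ hc]; exact hwk
    · rw [frob_expand]
      have h1 : (∑ i, (E.mulVec w i / Real.sqrt r) * E.mulVec (fun j => Real.sqrt r * w j) i) = r := by
        have : ∀ i, (E.mulVec w i / Real.sqrt r) * E.mulVec (fun j => Real.sqrt r * w j) i
            = (E.mulVec w i) ^ 2 := by
          intro i
          rw [mulVec_smul']
          field_simp
        rw [Finset.sum_congr rfl fun i _ => this i, ← hveq]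
      have h2 : (∑ i, (E.mulVec w i / Real.sqrt r) ^ 2) = 1 := by
        have : ∀ i, (E.mulVec w i / Real.sqrt r) ^ 2 = (E.mulVec w i) ^ 2 / r := by
          intro i; rw [div_pow, Real.sq_sqrt hrpos.le]
        rw [Finset.sum_congr rfl fun i _ => this i, ← Finset.sum_div, ← hveq,
          div_self hrpos.ne']
      have h3 : (∑ j, (Real.sqrt r * w j) ^ 2) = r := by
        have : ∀ j, (Real.sqrt r * w j) ^ 2 = r * w j ^ 2 := by
          intro j; rw [mul_pow, Real.sq_sqrt hrpos.le]
        rw [Finset.sum_congr rfl fun j _ => this j, ← Finset.mul_sum, hw1, mul_one]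
      rw [h1, h2, h3]
      ring
  -- setT is nonempty
  have hTne : setT.Nonempty := by
    obtain ⟨r, hr, hrpos⟩ : ∃ r ∈ setS, 0 < r := by
      obtain ⟨r, hr, hrlt⟩ := exists_lt_of_lt_csSup hSne (half_lt_self hpos)
      exact ⟨r, hr, lt_trans (half_pos hpos) hrlt⟩
    exact ⟨_, hconstruct r hr hrpos⟩
  -- every element of setT is ≥ frob2 E - S
  have hTlb : ∀ b ∈ setT, frob2 E - S ≤ b := by
    intro b hb
    obtain ⟨u, a, ⟨hu1, hak⟩, hba⟩ := hb
    rw [hba, frob_expand, hu1, one_mul]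
    set P := ∑ i, u i * E.mulVec a i with hP
    set t2 := ∑ j, a j ^ 2 with ht2
    have ht2nn : 0 ≤ t2 := Finset.sum_nonneg fun j _ => sq_nonneg _
    -- need : frob2 E - S ≤ frob2 E - 2 P + t2, i.e. 2 P - t2 ≤ S
    rcases eq_or_lt_of_le ht2nn with h0 | ht2pos
    · -- a = 0
      have haz : ∀ j, a j = 0 := by
        intro j
        have := (Finset.sum_eq_zero_iff_of_nonneg (fun j _ => sq_nonneg (a j))).mp h0.symm j
          (Finset.mem_univ j)
        exact pow_eq_zero_iff (n := 2) (by norm_num) |>.mp this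
      have hPz : P = 0 := by
        rw [hP]
        refine Finset.sum_eq_zero fun i _ => ?_
        have : E.mulVec a i = 0 := by
          simp [Matrix.mulVec, dotProduct, haz]
        rw [this, mul_zero]
      rw [hPz, ← h0]
      linarith
    · -- a ≠ 0 : normalize
      set t := Real.sqrt t2 with ht
      have htpos : 0 < t := Real.sqrt_pos.mpr ht2pos
      have ht2sq : t ^ 2 = t2 := Real.sq_sqrt ht2nn
      set w := fun j => (1 / t) * a j with hw
      have hw1 : ∑ j, w j ^ 2 = 1 := by
        have : ∀ j, w j ^ 2 = a j ^ 2 / t2 := by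
          intro j
          rw [hw]
          simp only
          rw [mul_pow, one_div, inv_pow, ht2sq, inv_mul_eq_div]
        rw [Finset.sum_congr rfl fun j _ => this j, ← Finset.sum_div, ← ht2,
          div_self ht2pos.ne']
      have hwk : spars w ≤ k := by
        rw [hw, spars_mul_left _ (by positivity : (1:ℝ)/t ≠ 0)]
        exact hak
      have hmem : (w ⬝ᵥ (Eᵀ * E).mulVec w) ∈ setS := ⟨w, ⟨hw1, hwk⟩, rfl⟩
      have hle : w ⬝ᵥ (Eᵀ * E).mulVec w ≤ S := le_csSup hSbdd hmem
      have hQ : w ⬝ᵥ (Eᵀ * E).mulVec w = (∑ i, (E.mulVec a i) ^ 2) / t2 := by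
        rw [quad_eq]
        have : ∀ i, (E.mulVec w i) ^ 2 = (E.mulVec a i) ^ 2 / t2 := by
          intro i
          rw [hw, mulVec_smul', mul_pow, one_div, inv_pow, ht2sq, inv_mul_eq_div]
        rw [Finset.sum_congr rfl fun i _ => this i, ← Finset.sum_div]
      set R := ∑ i, (E.mulVec a i) ^ 2 with hR
      have hRle : R ≤ S * t2 := by
        rw [hQ] at hle
        calc R = R / t2 * t2 := by field_simp
          _ ≤ S * t2 := by
            exact mul_le_mul_of_nonneg_right hle ht2nn
      have hPR : P ^ 2 ≤ R := by
        have := Finset.sum_mul_sq_le_sq_mul_sq Finset.univ u (fun i => E.mulVec a i)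
        rw [hu1, one_mul] at this
        exact this
      nlinarith [sq_nonneg (P - t2)]
  -- setT is bounded below
  have hTbdd : BddBelow setT := ⟨frob2 E - S, hTlb⟩
  apply le_antisymm
  · -- sInf setT ≤ frob2 E - S
    refine le_of_forall_pos_le_add fun ε hε => ?_
    have hε' : 0 < min ε S := lt_min hε hpos
    obtain ⟨r, hr, hrlt⟩ := exists_lt_of_lt_csSup hSne
      (show S - min ε S < S by linarith)
    have hrpos : 0 < r := lt_of_le_of_lt (by simp [hS]) hrlt
    have hrT := hconstruct r hr hrpos
    calc sInf setT ≤ frob2 E - r := csInf_le hTbdd hrT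
      _ ≤ frob2 E - S + ε := by
          have : min ε S ≤ ε := min_le_left _ _
          linarith
  · exact le_csInf hTne hTlb
end
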